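/- Let w ∈ ℂ satisfy |w| ≤ 1 and suppose the absolute value of the argument of w is at least π/3 (i.e., Re w ≤ |w|·cos(π/3) = |w|/2). Then 0 lies in the convex hull (over ℝ, in ℂ ≅ ℝ²) of the four points 1, w, w², w³; equivalently, there exist α₀, α₁, α₂, α₃ ≥ 0 with α₀ + α₁ + α₂ + α₃ = 1 and α₀ + α₁ w + α₂ w² + α₃ w³ = 0. -/

import Mathlib

lemma norm_helper (w : ℂ) (β₀ β₁ β₂ β₃ : ℝ) (h0 : 0 ≤ β₀) (h1 : 0 ≤ β₁) (h2 : 0 ≤ β₂)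
    (h3 : 0 ≤ β₃) (hT : 0 < β₀ + β₁ + β₂ + β₃)
    (heq : (β₀ : ℂ) + β₁ * w + β₂ * w ^ 2 + β₃ * w ^ 3 = 0) :
    ∃ α₀ α₁ α₂ α₃ : ℝ, 0 ≤ α₀ ∧ 0 ≤ α₁ ∧ 0 ≤ α₂ ∧ 0 ≤ α₃ ∧
      α₀ + α₁ + α₂ + α₃ = 1 ∧
      (α₀ : ℂ) + α₁ * w + α₂ * w ^ 2 + α₃ * w ^ 3 = 0 := by
  set T := β₀ + β₁ + β₂ + β₃ with hTdef
  refine ⟨β₀ / T, β₁ / T, β₂ / T, β₃ / T, by positivity, by positivity, by positivity,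
    by positivity, by field_simp; exact hTdef.symm, ?_⟩
  have hT0 : (T : ℂ) ≠ 0 := by exact_mod_cast hT.ne'
  have : ((β₀ : ℂ) + β₁ * w + β₂ * w ^ 2 + β₃ * w ^ 3) / T = 0 := by rw [heq]; simp
  rw [← this]
  push_cast
  field_simp

lemma exists_coeffs (w : ℂ) (harg : w.re ≤ ‖w‖ / 2) :
    ∃ α₀ α₁ α₂ α₃ : ℝ, 0 ≤ α₀ ∧ 0 ≤ α₁ ∧ 0 ≤ α₂ ∧ 0 ≤ α₃ ∧
      α₀ + α₁ + α₂ + α₃ = 1 ∧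
      (α₀ : ℂ) + α₁ * w + α₂ * w ^ 2 + α₃ * w ^ 3 = 0 := by
  set x := w.re with hx
  set y := w.im with hy
  rcases le_or_gt x 0 with hx0 | hx0
  · rcases eq_or_ne y 0 with hy0 | hy0
    · -- w is a nonpositive real
      have hwx : w = (x : ℂ) := by
        apply Complex.ext <;> simp [← hx, ← hy, hy0]
      apply norm_helper w (-x) 1 0 0 (by linarith) zero_le_one le_rfl le_rfl (by linarith)
      rw [hwx]; push_cast; ring
    · -- x ≤ 0, y ≠ 0 : use 1, w, w²
      have hay : 0 < |y| := abs_pos.2 hy0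
      apply norm_helper w (|y| * (x^2 + y^2)) (-2*x*|y|) |y| 0 (by positivity)
        (by nlinarith) hay.le le_rfl (by nlinarith)
      have h2 : w ^ 2 = Complex.mk (x^2 - y^2) (2*x*y) := by
        rw [pow_two]; apply Complex.ext <;> simp [Complex.mul_re, Complex.mul_im, ← hx, ← hy] <;> ring
      apply Complex.ext <;>
        simp [h2, ← Complex.ofReal_pow, ← Complex.ofReal_add, Complex.mul_re, Complex.mul_im, Complex.add_re, Complex.add_im, ← hx, ← hy] <;>
        cases abs_cases y <;> nlinarith [sq_nonneg x, sq_nonneg y]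
  · -- x > 0 : then 3x² ≤ y², use 1, w², w³
    have habs : 0 < ‖w‖ := lt_of_lt_of_le hx0 (le_trans harg (by linarith [norm_nonneg w]))
    have hsq : ‖w‖^2 = x^2 + y^2 := by
      rw [Complex.sq_norm, Complex.normSq_apply]; ring
    have h3x : 3 * x^2 ≤ y^2 := by nlinarith [harg, hsq, hx0]
    have hy0 : y ≠ 0 := by intro h; rw [h] at h3x; nlinarith
    have hay : 0 < |y| := abs_pos.2 hy0
    apply norm_helper w (|y| * (x^2 + y^2)^2) 0 (|y| * (y^2 - 3*x^2)) (2*x*|y|)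
      (by positivity) le_rfl (by nlinarith) (by positivity) (by nlinarith)
    have h2 : w ^ 2 = Complex.mk (x^2 - y^2) (2*x*y) := by
      rw [pow_two]; apply Complex.ext <;> simp [Complex.mul_re, Complex.mul_im, ← hx, ← hy] <;> ring
    have h3 : w ^ 3 = Complex.mk (x^3 - 3*x*y^2) (3*x^2*y - y^3) := by
      rw [pow_succ, h2]; apply Complex.ext <;> simp [Complex.mul_re, Complex.mul_im, ← hx, ← hy] <;> ring
    apply Complex.ext <;>
      simp [h2, h3, ← Complex.ofReal_pow, ← Complex.ofReal_add, Complex.mul_re, Complex.mul_im, Complex.add_re, Complex.add_im, ← hx, ← hy] <;>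
      cases abs_cases y <;> nlinarith [sq_nonneg x, sq_nonneg y, sq_nonneg (x^2+y^2)]


/-- If `w ∈ ℂ` satisfies `|w| ≤ 1` and `Re w ≤ |w|/2` (i.e. the argument of
`w` has absolute value at least `π/3`), then `0` lies in the convex hull of `1, w, w², w³`:
there exist `α₀, α₁, α₂, α₃ ≥ 0` with `α₀ + α₁ + α₂ + α₃ = 1` and
`α₀ + α₁ w + α₂ w² + α₃ w³ = 0`. -/
theorem zero_mem_convexHull_powers (w : ℂ) (hw : ‖w‖ ≤ 1)
    (harg : w.re ≤ ‖w‖ / 2) :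
    (0 : ℂ) ∈ convexHull ℝ {1, w, w ^ 2, w ^ 3} ∧
    ∃ α₀ α₁ α₂ α₃ : ℝ, 0 ≤ α₀ ∧ 0 ≤ α₁ ∧ 0 ≤ α₂ ∧ 0 ≤ α₃ ∧
      α₀ + α₁ + α₂ + α₃ = 1 ∧
      (α₀ : ℂ) + α₁ * w + α₂ * w ^ 2 + α₃ * w ^ 3 = 0 := by
  obtain ⟨α₀, α₁, α₂, α₃, h0, h1, h2, h3, hsum, heq⟩ := exists_coeffs w harg
  refine ⟨?_, α₀, α₁, α₂, α₃, h0, h1, h2, h3, hsum, heq⟩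
  have key : (∑ i : Fin 4, (![α₀, α₁, α₂, α₃] i) • (![(1:ℂ), w, w ^ 2, w ^ 3] i)) ∈
      convexHull ℝ ({1, w, w ^ 2, w ^ 3} : Set ℂ) :=
    (convex_convexHull ℝ ({1, w, w ^ 2, w ^ 3} : Set ℂ)).sum_mem
      (fun i _ => by fin_cases i <;> simpa using ‹_›)
      (by simp [Fin.sum_univ_four, hsum])
      (fun i _ => subset_convexHull ℝ _ (by fin_cases i <;> simp [Set.mem_insert_iff]))
  convert key using 1
  simp only [Fin.sum_univ_four, Matrix.cons_val_zero, Matrix.cons_val_one, Matrix.head_cons,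
    Matrix.cons_val_two, Matrix.cons_val_three, Matrix.tail_cons]
  rw [Complex.real_smul, Complex.real_smul, Complex.real_smul, Complex.real_smul]
  rw [← heq]; ring
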